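/- Let p be a prime and let Y ⊆ 𝔽_p be a finite set with ratio set R(Y) = {(a − b)/(c − d) : a, b, c, d ∈ Y, c ≠ d}. If R(Y) is nonempty and |R(Y)| ≥ |Y|², then there exists ξ ∈ R(Y) such that the number of quadruples (y₁, y₂, y₁', y₂') ∈ Y⁴ with y₁ + ξ·y₂ = y₁' + ξ·y₂' is at most 2·|Y|². -/

import Mathlib

/-- The ratio set of differences of a set `Y ⊆ 𝔽_p`:
`R(Y) = {(a − b)/(c − d) : a, b, c, d ∈ Y, c ≠ d}`. -/
def ratioSet {p : ℕ} [Fact p.Prime] (Y : Set (ZMod p)) : Set (ZMod p) :=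
  {x | ∃ a ∈ Y, ∃ b ∈ Y, ∃ c ∈ Y, ∃ d ∈ Y, c ≠ d ∧ x = (a - b) / (c - d)}

theorem stmt_10 (p : ℕ) [Fact p.Prime] (Y : Set (ZMod p))
    (hne : (ratioSet Y).Nonempty) (hbig : Y.ncard ^ 2 ≤ (ratioSet Y).ncard) :
    ∃ ξ ∈ ratioSet Y,
      {t : ZMod p × ZMod p × ZMod p × ZMod p |
          t.1 ∈ Y ∧ t.2.1 ∈ Y ∧ t.2.2.1 ∈ Y ∧ t.2.2.2 ∈ Y ∧
          t.1 + ξ * t.2.1 = t.2.2.1 + ξ * t.2.2.2}.ncard ≤ 2 * Y.ncard ^ 2 := by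
  classical
  have hYfin : Y.Finite := Set.toFinite Y
  have hRfin : (ratioSet Y).Finite := Set.toFinite _
  set n := Y.ncard with hn
  set YF := hYfin.toFinset with hYF
  set R := hRfin.toFinset with hRdef
  have hYcard : YF.card = n := (Set.ncard_eq_toFinset_card Y hYfin).symm
  have hRcard : n ^ 2 ≤ R.card := by
    rwa [Set.ncard_eq_toFinset_card _ hRfin] at hbig
  have hRne : R.Nonempty := by
    obtain ⟨x, hx⟩ := hne
    exact ⟨x, hRfin.mem_toFinset.mpr hx⟩
  set D : Finset (ZMod p × ZMod p × ZMod p × ZMod p) := YF ×ˢ YF ×ˢ YF ×ˢ YF with hD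
  have hDmem : ∀ t : ZMod p × ZMod p × ZMod p × ZMod p,
      t ∈ D ↔ t.1 ∈ Y ∧ t.2.1 ∈ Y ∧ t.2.2.1 ∈ Y ∧ t.2.2.2 ∈ Y := by
    intro t
    simp [hD, hYF, Finset.mem_product, hYfin.mem_toFinset]
  have hDcard : D.card = n ^ 4 := by
    simp [hD, Finset.card_product, hYcard]; ring
  set Q : ZMod p → Finset (ZMod p × ZMod p × ZMod p × ZMod p) :=
    fun ξ => D.filter (fun t => t.1 + ξ * t.2.1 = t.2.2.1 + ξ * t.2.2.2) with hQ
  have hQeq : ∀ ξ : ZMod p,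
      {t : ZMod p × ZMod p × ZMod p × ZMod p |
          t.1 ∈ Y ∧ t.2.1 ∈ Y ∧ t.2.2.1 ∈ Y ∧ t.2.2.2 ∈ Y ∧
          t.1 + ξ * t.2.1 = t.2.2.1 + ξ * t.2.2.2}.ncard = (Q ξ).card := by
    intro ξ
    rw [← Set.ncard_coe_finset]
    congr 1
    ext t
    simp only [Set.mem_setOf_eq, Finset.coe_filter, hQ, hDmem t]
    tauto
  set Qdiag : Finset (ZMod p × ZMod p × ZMod p × ZMod p) :=
    D.filter (fun t => t.1 = t.2.2.1 ∧ t.2.1 = t.2.2.2) with hQdiag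
  have hdiagcard : Qdiag.card ≤ n ^ 2 := by
    have : Qdiag.card ≤ (YF ×ˢ YF).card := by
      apply Finset.card_le_card_of_injOn (fun t => (t.1, t.2.1))
      · intro t ht
        rw [Finset.mem_coe, hQdiag, Finset.mem_filter] at ht
        have := (hDmem t).mp ht.1
        simp [hYF, Finset.mem_product, hYfin.mem_toFinset, this.1, this.2.1]
      · intro t ht t' ht' h
        simp only [Finset.mem_coe, hQdiag, Finset.mem_filter] at ht ht'
        have h1 : t.1 = t'.1 := (Prod.ext_iff.mp h).1
        have h2 : t.2.1 = t'.2.1 := (Prod.ext_iff.mp h).2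
        
        have e1 := ht.2.1; have e2 := ht.2.2
        have e1' := ht'.2.1; have e2' := ht'.2.2
        ext <;> simp_all
    simpa [Finset.card_product, hYcard, sq] using this
  set Qoff : ZMod p → Finset (ZMod p × ZMod p × ZMod p × ZMod p) :=
    fun ξ => D.filter (fun t => t.2.1 ≠ t.2.2.2 ∧
      t.1 + ξ * t.2.1 = t.2.2.1 + ξ * t.2.2.2) with hQoff
  have hsplit : ∀ ξ, (Q ξ).card ≤ n ^ 2 + (Qoff ξ).card := by
    intro ξ
    have hsub : Q ξ ⊆ Qdiag ∪ Qoff ξ := by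
      intro t ht
      rw [hQ, Finset.mem_filter] at ht
      by_cases h : t.2.1 = t.2.2.2
      · refine Finset.mem_union_left _ ?_
        rw [hQdiag, Finset.mem_filter]
        refine ⟨ht.1, ?_, h⟩
        have := ht.2
        rw [h] at this
        exact add_right_cancel this
      · exact Finset.mem_union_right _ (by rw [hQoff, Finset.mem_filter]; exact ⟨ht.1, h, ht.2⟩)
    calc (Q ξ).card ≤ (Qdiag ∪ Qoff ξ).card := Finset.card_le_card hsub
      _ ≤ Qdiag.card + (Qoff ξ).card := Finset.card_union_le _ _
      _ ≤ n ^ 2 + (Qoff ξ).card := by omega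
  have hdisj : ∀ ξ ∈ R, ∀ ξ' ∈ R, ξ ≠ ξ' → Disjoint (Qoff ξ) (Qoff ξ') := by
    intro ξ _ ξ' _ hne'
    rw [Finset.disjoint_left]
    intro t ht ht'
    rw [hQoff, Finset.mem_filter] at ht ht'
    obtain ⟨_, hne2, h1⟩ := ht
    obtain ⟨_, _, h2⟩ := ht'
    apply hne'
    have key : ξ * (t.2.1 - t.2.2.2) = ξ' * (t.2.1 - t.2.2.2) := by
      linear_combination h1 - h2
    exact mul_right_cancel₀ (sub_ne_zero.mpr hne2) key
  have hsum : ∑ ξ ∈ R, (Qoff ξ).card ≤ n ^ 4 := by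
    rw [← Finset.card_biUnion hdisj]
    calc (R.biUnion Qoff).card ≤ D.card := by
          apply Finset.card_le_card
          intro t ht
          obtain ⟨ξ, _, ht⟩ := Finset.mem_biUnion.mp ht
          rw [hQoff, Finset.mem_filter] at ht
          exact ht.1
      _ = n ^ 4 := hDcard
  by_contra hcon
  push_neg at hcon
  have hlow : ∀ ξ ∈ R, 2 * n ^ 2 + 1 ≤ (Q ξ).card := by
    intro ξ hξ
    have := hcon ξ (hRfin.mem_toFinset.mp hξ)
    rw [hQeq ξ] at this
    omega
  have htot : R.card * (2 * n ^ 2 + 1) ≤ ∑ ξ ∈ R, (Q ξ).card := by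
    simpa [smul_eq_mul] using Finset.card_nsmul_le_sum R (fun ξ => (Q ξ).card) _ hlow
  have htot2 : ∑ ξ ∈ R, (Q ξ).card ≤ R.card * n ^ 2 + n ^ 4 := by
    calc ∑ ξ ∈ R, (Q ξ).card ≤ ∑ ξ ∈ R, (n ^ 2 + (Qoff ξ).card) :=
          Finset.sum_le_sum (fun ξ _ => hsplit ξ)
      _ = R.card * n ^ 2 + ∑ ξ ∈ R, (Qoff ξ).card := by
          rw [Finset.sum_add_distrib, Finset.sum_const, smul_eq_mul]
      _ ≤ R.card * n ^ 2 + n ^ 4 := by omega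
  have hn4 : n ^ 4 ≤ R.card * n ^ 2 := by
    calc n ^ 4 = n ^ 2 * n ^ 2 := by ring
      _ ≤ R.card * n ^ 2 := Nat.mul_le_mul_right _ hRcard
  have hR1 : 1 ≤ R.card := Finset.card_pos.mpr hRne
  nlinarith [htot, htot2, hn4, hR1]
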